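/- If every sender in the Min-Age problem has exactly one message (|M_i| = 1 for all i), then in the corresponding Min-WCS instance every chain has one job, cs is the same constant Σ_{t=1}^n t^2 for all feasible schedules, and the Min-Age problem is solved optimally by transmitting messages in nonincreasing order of w_i = 2(T_0 − 1/2 − b(M_i^0)), i.e., in nondecreasing order of b(M_i^0): the schedule sending messages in nondecreasing order of the initial birthday b(M_i^0) minimizes the overall age. -/

import Mathlib

/-- Summing a composed function over a bijection onto a finset. -/
lemma sum_comp_feas {α M : Type*} [DecidableEq α] [AddCommMonoid M] {n : ℕ}
    {S : Fin n → α} {I : Finset α}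
    (hmem : ∀ i, S i ∈ I) (hinj : Function.Injective S)
    (hsurj : ∀ t ∈ I, ∃ i, S i = t) (g : α → M) :
    ∑ i, g (S i) = ∑ t ∈ I, g t := by
  have himg : Finset.image S Finset.univ = I := by
    apply Finset.Subset.antisymm
    · intro x hx
      simp only [Finset.mem_image] at hx
      obtain ⟨i, _, rfl⟩ := hx
      exact hmem i
    · intro t ht
      obtain ⟨i, rfl⟩ := hsurj t ht
      exact Finset.mem_image_of_mem S (Finset.mem_univ i)
  rw [← himg, Finset.sum_image (fun x _ y _ h => hinj h)]

/-- Feasible job schedule for `n` single-job chains: a bijection onto `{1, …, n}`. -/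
def JobFeas1 (n : ℕ) (S : Fin n → ℕ) : Prop :=
  (∀ i, S i ∈ Finset.Icc 1 n) ∧ Function.Injective S ∧
  (∀ t ∈ Finset.Icc 1 n, ∃ i, S i = t)

/-- Feasible Min-Age schedule when each pair has a single message: a bijection
from the `n` messages onto `{T0+1, …, T0+n}`. -/
def AgeFeas1 (n : ℕ) (T0 : ℤ) (S : Fin n → ℤ) : Prop :=
  (∀ i, S i ∈ Finset.Icc (T0 + 1) (T0 + n)) ∧ Function.Injective S ∧
  (∀ t ∈ Finset.Icc (T0 + 1) (T0 + (n : ℤ)), ∃ i, S i = t)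

/-- Overall age: receiver `i` has age `t - b0 i` until it receives its single
message (at time `S i`) and age `0` thereafter. -/
noncomputable def Age1 (n : ℕ) (T0 : ℤ) (b0 : Fin n → ℤ) (S : Fin n → ℤ) : ℤ :=
  ∑ i, ∑ t ∈ Finset.Icc T0 (T0 + (n : ℤ)), if S i ≤ t then 0 else t - b0 i

lemma age_eq {n : ℕ} {T0 : ℤ} (b0 : Fin n → ℤ) (S : Fin n → ℤ)
    (hmem : ∀ i, S i ∈ Finset.Icc (T0 + 1) (T0 + n)) :
    Age1 n T0 b0 S
      = ∑ i, ((∑ t ∈ Finset.Icc T0 (S i - 1), t) - (S i - T0) * b0 i) := by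
  unfold Age1
  apply Finset.sum_congr rfl
  intro i _
  have hi := hmem i
  simp only [Finset.mem_Icc] at hi
  have h1 : ∀ t : ℤ, (if S i ≤ t then (0:ℤ) else t - b0 i)
      = if t < S i then t - b0 i else 0 := by
    intro t
    rcases lt_or_ge t (S i) with h | h
    · simp [h, not_le.2 h]
    · simp [h, not_lt.2 h]
  rw [Finset.sum_congr rfl (fun t _ => h1 t), ← Finset.sum_filter]
  have hf : (Finset.Icc T0 (T0 + (n:ℤ))).filter (· < S i)
      = Finset.Icc T0 (S i - 1) := by
    ext t
    simp only [Finset.mem_filter, Finset.mem_Icc]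
    omega
  rw [hf, Finset.sum_sub_distrib, Finset.sum_const, Int.card_Icc]
  have hc : ((S i - 1 + 1 - T0).toNat : ℤ) = S i - T0 := by omega
  rw [nsmul_eq_mul, hc]

/-- If every sender has exactly one message, then in the corresponding Min-WCS
instance every chain is a single job and `cs` is the constant `∑ t²`; and the
Min-Age problem is solved optimally by any feasible schedule transmitting
messages in nondecreasing order of the initial birthday `b0`. -/
theorem single_message_minAge
    (n : ℕ) (T0 : ℤ) (b0 b1 : Fin n → ℤ)
    (hb0 : ∀ i, 0 ≤ b0 i) (hb01 : ∀ i, b0 i < b1 i) (hb1 : ∀ i, b1 i ≤ T0) :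
    (∀ Sjob : Fin n → ℕ, JobFeas1 n Sjob →
      ∑ i, (Sjob i) ^ 2 = ∑ t ∈ Finset.Icc 1 n, t ^ 2) ∧
    (∀ S : Fin n → ℤ, AgeFeas1 n T0 S →
      (∀ i j, S i < S j → b0 i ≤ b0 j) →
      ∀ S' : Fin n → ℤ, AgeFeas1 n T0 S' →
        Age1 n T0 b0 S ≤ Age1 n T0 b0 S') := by
  constructor
  · rintro Sjob ⟨hmem, hinj, hsurj⟩
    exact sum_comp_feas hmem hinj hsurj (fun t => t ^ 2)
  · rintro S hS hmono S' hS'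
    obtain ⟨hmem, hinj, hsurj⟩ := hS
    obtain ⟨hmem', hinj', hsurj'⟩ := hS'
    -- permutation σ with S ∘ σ = S'
    have hexists : ∀ i, ∃ j, S j = S' i := fun i => hsurj (S' i) (hmem' i)
    choose τ hτ using hexists
    have hτinj : Function.Injective τ := fun i k h =>
      hinj' (by rw [← hτ i, ← hτ k, h])
    let σ : Equiv.Perm (Fin n) :=
      Equiv.ofBijective τ (Finite.injective_iff_bijective.mp hτinj)
    have hστ : ∀ i, S (σ i) = S' i := hτ
    -- rearrangement inequality
    have hmv : Monovary b0 S := fun i j h => hmono i j h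
    have key : ∑ i, b0 i * S' i ≤ ∑ i, b0 i * S i := by
      have h := hmv.sum_smul_comp_perm_le_sum_smul (σ := σ)
      simp only [smul_eq_mul] at h
      calc ∑ i, b0 i * S' i = ∑ i, b0 i * S (σ i) := by
              simp [hστ]
        _ ≤ ∑ i, b0 i * S i := h
    -- constant part
    have hG : ∑ i, (∑ t ∈ Finset.Icc T0 (S i - 1), t)
        = ∑ i, (∑ t ∈ Finset.Icc T0 (S' i - 1), t) := by
      rw [sum_comp_feas hmem hinj hsurj (fun s => ∑ t ∈ Finset.Icc T0 (s - 1), t),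
        sum_comp_feas hmem' hinj' hsurj' (fun s => ∑ t ∈ Finset.Icc T0 (s - 1), t)]
    rw [age_eq b0 S hmem, age_eq b0 S' hmem',
      Finset.sum_sub_distrib, Finset.sum_sub_distrib]
    have h1 : ∑ i, (S i - T0) * b0 i = ∑ i, b0 i * S i - ∑ i, T0 * b0 i := by
      rw [← Finset.sum_sub_distrib]
      exact Finset.sum_congr rfl fun i _ => by ring
    have h2 : ∑ i, (S' i - T0) * b0 i = ∑ i, b0 i * S' i - ∑ i, T0 * b0 i := by
      rw [← Finset.sum_sub_distrib]
      exact Finset.sum_congr rfl fun i _ => by ring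
    linarith
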